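/- Let n ≥ 1, s ∈ {1,…,n}, let μ be a measure on a metric (or topological) space X, B ⊆ X a set, and f : B → ℝⁿ any map. Let v > n, c_s = (v−n)/(sv+n), and suppose there is d > c_s, a sequence t⁽ʲ⁾ = (t₁⁽ʲ⁾,…,t_n⁽ʲ⁾) with tᵢ⁽ʲ⁾ ≥ 0 and ∑ᵢtᵢ⁽ʲ⁾ → ∞, and vectors w⁽ʲ⁾ ∈ ℤ^{n+1}_s, such that for every x ∈ B ∩ supp μ and every j, ‖g_{t⁽ʲ⁾} u_{f(x)} w⁽ʲ⁾‖ < e^{−d·∑ᵢtᵢ⁽ʲ⁾}. Then there exists u > v such that f(B ∩ supp μ) ⊆ W×_u, i.e. ω×(f(x)) ≥ u for every x ∈ B ∩ supp μ. -/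

import Mathlib

open Filter MeasureTheory Metric Set BigOperators

/-- Π×(q) = ∏_{i : qᵢ ≠ 0} |qᵢ| (empty product = 1). -/
noncomputable def prodTimes {n : ℕ} (q : Fin n → ℤ) : ℝ :=
  ∏ i, if q i = 0 then 1 else |(q i : ℝ)|

/-- Multiplicative Diophantine exponent ω×(y): the sup (in the extended reals) of all
v ∈ ℝ such that there are infinitely many q ∈ ℤⁿ with |q·y + p| < Π×(q)^{-v/n}
for some p ∈ ℤ. -/
noncomputable def omegaT {n : ℕ} (y : Fin n → ℝ) : EReal :=
  sSup {w : EReal | ∃ v : ℝ, w = (v : EReal) ∧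
    {q : Fin n → ℤ | ∃ p : ℤ, |(∑ i, (q i : ℝ) * y i) + (p : ℝ)| <
      (prodTimes q) ^ (-(v / (n : ℝ)))}.Infinite}

/-- Support of a measure on a topological space: points all of whose neighborhoods
have positive measure. -/
def msupp {X : Type*} [TopologicalSpace X] [MeasurableSpace X] (μ : Measure X) : Set X :=
  {x | ∀ U ∈ nhds x, 0 < μ U}

lemma one_le_prodTimes {n : ℕ} (q : Fin n → ℤ) : 1 ≤ prodTimes q := by
  unfold prodTimes
  calc (1:ℝ) = ∏ _i : Fin n, 1 := by simp
    _ ≤ ∏ i, if q i = 0 then 1 else |(q i : ℝ)| := by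
      apply Finset.prod_le_prod
      · intro i _; by_cases h : q i = 0 <;> simp [h]
      · intro i _
        by_cases h : q i = 0
        · simp [h]
        · simp only [h, if_false]
          rw [← Int.cast_abs]
          exact_mod_cast Int.one_le_abs h

theorem stmt10 {X : Type*} [MetricSpace X] [MeasurableSpace X]
    (μ : Measure X) (B : Set X) (n : ℕ) (hn : 1 ≤ n)
    (s : ℕ) (hs1 : 1 ≤ s) (hsn : s ≤ n)
    (f : X → Fin n → ℝ) (v d : ℝ) (hv : (n : ℝ) < v)
    (hd : (v - n) / (s * v + n) < d)
    (t : ℕ → Fin n → ℝ) (ht0 : ∀ j i, 0 ≤ t j i)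
    (htend : Filter.Tendsto (fun j => ∑ i, t j i) Filter.atTop Filter.atTop)
    (p : ℕ → ℤ) (q : ℕ → Fin n → ℤ)
    (hw : ∀ j, (Finset.univ.filter fun i => q j i ≠ 0).card = s)
    (hsmall : ∀ x ∈ B ∩ msupp μ, ∀ j,
      Real.exp (∑ i, t j i) * |(p j : ℝ) + ∑ i, (q j i : ℝ) * f x i| <
        Real.exp (-d * ∑ i, t j i) ∧
      ∀ i, Real.exp (-(t j i)) * |(q j i : ℝ)| < Real.exp (-d * ∑ i, t j i)) :
    ∃ u > v, ∀ x ∈ B ∩ msupp μ, (u : EReal) ≤ omegaT (f x) := by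
  by_cases hne : (B ∩ msupp μ).Nonempty
  swap
  · exact ⟨v + 1, by linarith, fun x hx => absurd ⟨x, hx⟩ hne⟩
  obtain ⟨x₀, hx₀⟩ := hne
  have hn0 : (0:ℝ) < n := by exact_mod_cast hn
  have hs0 : (0:ℝ) < s := by exact_mod_cast hs1
  have hv0 : 0 < v := lt_trans hn0 hv
  have hden : 0 < (s:ℝ) * v + (n:ℝ) := by positivity
  have hd0 : 0 < d := lt_of_le_of_lt (le_of_lt (div_pos (by linarith) hden)) hd
  -- derive s * d < 1 using some j₀ with large T
  obtain ⟨j₀, hj₀⟩ := (htend.eventually_ge_atTop 1).exists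
  have hsd : (s:ℝ) * d < 1 := by
    set T₀ := ∑ i, t j₀ i with hT₀def
    have h2 := (hsmall x₀ hx₀ j₀).2
    have key : ∀ i, q j₀ i ≠ 0 → d * T₀ < t j₀ i := by
      intro i hi
      have hq1 : (1:ℝ) ≤ |(q j₀ i : ℝ)| := by
        rw [← Int.cast_abs]; exact_mod_cast Int.one_le_abs hi
      have h3 : Real.exp (-(t j₀ i)) ≤ Real.exp (-(t j₀ i)) * |(q j₀ i : ℝ)| :=
        le_mul_of_one_le_right (Real.exp_pos _).le hq1
      have h4 : Real.exp (-(t j₀ i)) < Real.exp (-d * T₀) := lt_of_le_of_lt h3 (h2 i)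
      have := Real.exp_lt_exp.mp h4
      linarith
    have hF : (Finset.univ.filter fun i => q j₀ i ≠ 0).Nonempty := by
      rw [← Finset.card_pos, hw j₀]; exact hs1
    have h5 : ∑ _i ∈ Finset.univ.filter (fun i => q j₀ i ≠ 0), (d * T₀) <
        ∑ i ∈ Finset.univ.filter (fun i => q j₀ i ≠ 0), t j₀ i :=
      Finset.sum_lt_sum_of_nonempty hF (fun i hi => key i (Finset.mem_filter.mp hi).2)
    rw [Finset.sum_const, hw j₀, nsmul_eq_mul] at h5
    have h6 : ∑ i ∈ Finset.univ.filter (fun i => q j₀ i ≠ 0), t j₀ i ≤ T₀ :=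
      Finset.sum_le_sum_of_subset_of_nonneg (Finset.filter_subset _ _)
        (fun i _ _ => ht0 j₀ i)
    have hT0pos : (0:ℝ) < T₀ := lt_of_lt_of_le one_pos hj₀
    nlinarith
  have hsd1 : 0 < 1 - (s:ℝ) * d := by linarith
  set u := (n:ℝ) * (1 + d) / (1 - s * d) with hu_def
  have huv : v < u := by
    rw [hu_def, lt_div_iff₀ hsd1]
    have := (div_lt_iff₀ hden).mp hd
    nlinarith
  have hun : (1 - (s:ℝ)*d) * (u/(n:ℝ)) = 1 + d := by
    rw [hu_def]; field_simp
  have hudiv : 0 < u / (n:ℝ) := by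
    have : 0 < u := lt_trans hv0 huv
    positivity
  refine ⟨u, huv, fun x hx => ?_⟩
  set y := f x with hy
  have h1 := fun j => (hsmall x hx j).1
  have h2 := fun j => (hsmall x hx j).2
  have h1d : (0:ℝ) < 1 + d := by linarith
  -- closeness of the linear form
  have hclose : ∀ j, |(∑ i, (q j i : ℝ) * y i) + (p j : ℝ)| <
      Real.exp (-(1+d) * ∑ i, t j i) := by
    intro j
    have h := mul_lt_mul_of_pos_left (h1 j) (Real.exp_pos (-(∑ i, t j i)))
    rw [← mul_assoc, ← Real.exp_add, ← Real.exp_add] at h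
    simp only [neg_add_cancel, Real.exp_zero, one_mul] at h
    calc |(∑ i, (q j i : ℝ) * y i) + (p j : ℝ)|
        = |(p j:ℝ) + ∑ i, (q j i : ℝ) * y i| := by congr 1; ring
      _ < Real.exp (-(∑ i, t j i) + -d * ∑ i, t j i) := h
      _ = Real.exp (-(1+d) * ∑ i, t j i) := by congr 1; ring
  -- each q j is a solution for exponent u
  have hmem : ∀ j, ∃ pp : ℤ, |(∑ i, (q j i : ℝ) * y i) + (pp : ℝ)| <
      prodTimes (q j) ^ (-(u / (n:ℝ))) := by
    intro j
    refine ⟨p j, ?_⟩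
    set T := ∑ i, t j i with hTdef
    have hT0 : 0 ≤ T := Finset.sum_nonneg fun i _ => ht0 j i
    have hP1 : 1 ≤ prodTimes (q j) := one_le_prodTimes _
    have hP0 : (0:ℝ) < prodTimes (q j) := lt_of_lt_of_le one_pos hP1
    have hPle : prodTimes (q j) ≤ Real.exp ((1 - s*d) * T) := by
      have step : prodTimes (q j) ≤
          Real.exp (∑ i, if q j i ≠ 0 then t j i - d*T else 0) := by
        rw [Real.exp_sum]
        unfold prodTimes
        apply Finset.prod_le_prod
        · intro i _
          by_cases h : q j i = 0 <;> simp [h]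
        · intro i _
          by_cases h : q j i = 0
          · simp [h]
          · simp only [h, if_neg, ne_eq, not_false_eq_true, if_true, if_false]
            have hq := h2 j i
            have heq : |(q j i:ℝ)| =
                Real.exp (t j i) * (Real.exp (-(t j i)) * |(q j i:ℝ)|) := by
              rw [← mul_assoc, ← Real.exp_add]; simp
            rw [heq]
            calc Real.exp (t j i) * (Real.exp (-(t j i)) * |(q j i:ℝ)|)
                ≤ Real.exp (t j i) * Real.exp (-d * T) :=
                  mul_le_mul_of_nonneg_left hq.le (Real.exp_pos _).le
              _ = Real.exp (t j i - d*T) := by rw [← Real.exp_add]; congr 1; ring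
      refine step.trans (Real.exp_le_exp.mpr ?_)
      rw [← Finset.sum_filter, Finset.sum_sub_distrib, Finset.sum_const, hw j,
        nsmul_eq_mul]
      have hle : ∑ i ∈ Finset.univ.filter (fun i => q j i ≠ 0), t j i ≤ T :=
        Finset.sum_le_sum_of_subset_of_nonneg (Finset.filter_subset _ _)
          (fun i _ _ => ht0 j i)
      nlinarith
    have hpow : prodTimes (q j) ^ (u/(n:ℝ)) ≤ Real.exp ((1+d) * T) := by
      have hr := Real.rpow_le_rpow hP0.le hPle hudiv.le
      refine hr.trans ?_
      rw [← Real.exp_mul]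
      exact Real.exp_le_exp.mpr (le_of_eq (by linear_combination T * hun))
    have hfinal : Real.exp (-(1+d)*T) ≤ prodTimes (q j) ^ (-(u/(n:ℝ))) := by
      rw [Real.rpow_neg hP0.le, show (-(1+d)*T) = -((1+d)*T) by ring, Real.exp_neg]
      exact inv_anti₀ (Real.rpow_pos_of_pos hP0 _) hpow
    exact lt_of_lt_of_le (hclose j) hfinal
  -- infinitude of the solution set
  have hinf : {qq : Fin n → ℤ | ∃ pp : ℤ, |(∑ i, (qq i : ℝ) * y i) + (pp : ℝ)| <
      prodTimes qq ^ (-(u / (n:ℝ)))}.Infinite := by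
    set S := {qq : Fin n → ℤ | ∃ pp : ℤ, |(∑ i, (qq i : ℝ) * y i) + (pp : ℝ)| <
      prodTimes qq ^ (-(u / (n:ℝ)))} with hSdef
    rcases Set.finite_or_infinite S with hfin | hinf
    · exfalso
      haveI := hfin.to_subtype
      obtain ⟨q₀, hq₀⟩ := Finite.exists_infinite_fiber
        (fun j => (⟨q j, hmem j⟩ : S))
      set J : Set ℕ := {j | q j = (q₀ : Fin n → ℤ)} with hJdef
      have hJ : J.Infinite := by
        have hpre : ((fun j => (⟨q j, hmem j⟩ : S)) ⁻¹' {q₀}).Infinite :=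
          Set.infinite_coe_iff.mp hq₀
        refine hpre.mono ?_
        intro j hj
        have : (⟨q j, hmem j⟩ : S) = q₀ := hj
        exact congrArg Subtype.val this
      obtain ⟨j₁, hj₁⟩ := hJ.nonempty
      obtain ⟨i₀, hi₀⟩ : ∃ i, (q₀ : Fin n → ℤ) i ≠ 0 := by
        have hcard := hw j₁
        rw [show q j₁ = (q₀ : Fin n → ℤ) from hj₁] at hcard
        have : (Finset.univ.filter fun i => (q₀:Fin n → ℤ) i ≠ 0).Nonempty := by
          rw [← Finset.card_pos, hcard]; exact hs1
        obtain ⟨i, hi⟩ := this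
        exact ⟨i, (Finset.mem_filter.mp hi).2⟩
      set A := ∑ i, ((q₀ : Fin n → ℤ) i : ℝ) * y i with hAdef
      have hcloseJ : ∀ j ∈ J, |A + (p j : ℝ)| < Real.exp (-(1+d) * ∑ i, t j i) := by
        intro j hj
        have := hclose j
        rw [show q j = (q₀ : Fin n → ℤ) from hj] at this
        exact this
      have hbig : ∀ ε : ℝ, 0 < ε → ∃ j ∈ J, Real.exp (-(1+d) * ∑ i, t j i) < ε := by
        intro ε hε
        set C := (-Real.log ε)/(1+d) + 1 with hCdef
        obtain ⟨N, hN⟩ := Filter.eventually_atTop.mp (htend.eventually_ge_atTop C)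
        obtain ⟨j, hjJ, hj⟩ := hJ.exists_gt N
        refine ⟨j, hjJ, ?_⟩
        have hTj : C ≤ ∑ i, t j i := hN j hj.le
        have hmul : (1+d) * C = -Real.log ε + (1+d) := by
          rw [hCdef]; field_simp
        have hCle : (1+d) * C ≤ (1+d) * ∑ i, t j i :=
          mul_le_mul_of_nonneg_left hTj h1d.le
        have : -(1+d) * ∑ i, t j i < Real.log ε := by nlinarith
        calc Real.exp (-(1+d) * ∑ i, t j i) < Real.exp (Real.log ε) :=
              Real.exp_lt_exp.mpr this
          _ = ε := Real.exp_log hε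
      obtain ⟨j₂, hj₂J, hj₂⟩ := hbig (1/2) (by norm_num)
      have hA2 : |A + (p j₂ : ℝ)| < 1/2 := lt_trans (hcloseJ j₂ hj₂J) hj₂
      have hzero : A + (p j₂ : ℝ) = 0 := by
        by_contra hne0
        have hδ : 0 < |A + (p j₂ : ℝ)| := abs_pos.mpr hne0
        obtain ⟨j₃, hj₃J, hj₃⟩ := hbig (min (|A + (p j₂ : ℝ)|) (1/2))
          (lt_min hδ (by norm_num))
        have hA3 : |A + (p j₃ : ℝ)| < min (|A + (p j₂ : ℝ)|) (1/2) :=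
          lt_trans (hcloseJ j₃ hj₃J) hj₃
        have hA3' : |A + (p j₃ : ℝ)| < 1/2 := lt_of_lt_of_le hA3 (min_le_right _ _)
        have heq : p j₂ = p j₃ := by
          have h5 : |(p j₂ : ℝ) - (p j₃ : ℝ)| < 1 := by
            calc |(p j₂:ℝ) - (p j₃:ℝ)| = |(A + p j₂) - (A + p j₃)| := by ring_nf
              _ ≤ |A + (p j₂:ℝ)| + |A + (p j₃:ℝ)| := abs_sub _ _
              _ < 1 := by linarith
          have h6 : |p j₂ - p j₃| < 1 := by exact_mod_cast h5
          have := abs_lt.mp h6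
          omega
        rw [heq] at hδ
        exact absurd (lt_of_lt_of_le hA3 (by rw [heq]; exact min_le_left _ _))
          (lt_irrefl _)
      -- now build infinitely many solutions
      have hSinf : S.Infinite := by
        refine Set.infinite_of_injective_forall_mem
          (f := fun k : ℕ => fun i => ((k:ℤ) + 1) * (q₀ : Fin n → ℤ) i) ?_ ?_
        · intro k k' hkk
          have := congrFun hkk i₀
          simp only at this
          have h7 : ((k:ℤ) + 1) = ((k':ℤ) + 1) := mul_right_cancel₀ hi₀ this
          exact_mod_cast (by omega : (k:ℤ) = k')
        · intro k
          refine ⟨((k:ℤ)+1) * p j₂, ?_⟩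
          have hzero2 : (∑ i, ((((k:ℤ)+1) * (q₀:Fin n → ℤ) i : ℤ) : ℝ) * y i)
              + ((((k:ℤ)+1) * p j₂ : ℤ) : ℝ) = 0 := by
            push_cast
            rw [show (∑ i, ((k:ℝ)+1) * ((q₀:Fin n → ℤ) i : ℝ) * y i)
                = ((k:ℝ)+1) * ∑ i, ((q₀:Fin n → ℤ) i : ℝ) * y i by
              rw [Finset.mul_sum]; congr 1; funext i; ring]
            rw [← hAdef]
            nlinarith [hzero]
          show |(∑ i, ((((k:ℤ)+1) * (q₀:Fin n → ℤ) i : ℤ) : ℝ) * y i)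
              + ((((k:ℤ)+1) * p j₂ : ℤ) : ℝ)| <
            prodTimes (fun i => ((k:ℤ)+1) * (q₀:Fin n → ℤ) i) ^ (-(u/(n:ℝ)))
          rw [hzero2, abs_zero]
          exact Real.rpow_pos_of_pos
            (lt_of_lt_of_le one_pos (one_le_prodTimes _)) _
      exact Set.not_infinite.mpr hfin hSinf
    · exact hinf
  exact le_sSup ⟨u, rfl, hinf⟩
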